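/- Let λ > 0, let (η_t)_{t∈ℕ} be a sequence with η_t ∈ (0, 1/λ] for all t and ∑_{t=0}^∞ η_t = ∞, let (β_t)_{t∈ℕ} be a sequence of nonnegative reals with β_t → 0, and let (ε_t)_{t∈ℕ} be a sequence of nonnegative reals satisfying ε_{t+1} ≤ (1 − η_t·λ)·ε_t + η_t·β_t for all t. Then ε_t → 0 as t → ∞. -/
import Mathlib


/-- deterministic tracking recursion: if `λ > 0`,
`η_t ∈ (0, 1/λ]` with `∑ η_t = ∞`, `β_t ≥ 0` with `β_t → 0`, and the
nonnegative errors satisfy `ε_{t+1} ≤ (1 − η_t·λ)·ε_t + η_t·β_t`, then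
`ε_t → 0`. -/
theorem tracking_recursion_tendsto_zero
    (lam : ℝ) (hlam : 0 < lam)
    (η : ℕ → ℝ)
    (hη : ∀ t, η t ∈ Set.Ioc (0 : ℝ) (1 / lam))
    (hηsum : Filter.Tendsto (fun n => ∑ t ∈ Finset.range n, η t)
      Filter.atTop Filter.atTop)
    (β : ℕ → ℝ) (hβnonneg : ∀ t, 0 ≤ β t)
    (hβ : Filter.Tendsto β Filter.atTop (nhds 0))
    (ε : ℕ → ℝ) (hεnonneg : ∀ t, 0 ≤ ε t)
    (hrec : ∀ t, ε (t + 1) ≤ (1 - η t * lam) * ε t + η t * β t) :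
    Filter.Tendsto ε Filter.atTop (nhds 0) := by
  have hfac : ∀ t, 0 ≤ 1 - η t * lam := by
    intro t
    have h := (hη t).2
    have h2 : η t * lam ≤ 1 := by
      rw [le_div_iff₀ hlam] at h
      linarith
    linarith
  rw [Metric.tendsto_atTop]
  intro δ hδ
  -- choose T so that β t ≤ lam * (δ/3) for t ≥ T
  have hβ' : ∀ᶠ t in Filter.atTop, β t < lam * (δ / 3) := by
    exact hβ.eventually (eventually_lt_nhds (by positivity))
  obtain ⟨T, hT⟩ := Filter.eventually_atTop.mp hβ'
  set P : ℕ → ℝ := fun n => ∏ k ∈ Finset.range n, (1 - η (T + k) * lam) with hP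
  have hPnonneg : ∀ n, 0 ≤ P n := fun n =>
    Finset.prod_nonneg fun k _ => hfac _
  have key : ∀ n, ε (T + n) ≤ δ / 3 + P n * ε T := by
    intro n
    induction n with
    | zero => simp [hP]; linarith [hδ]
    | succ n ih =>
      have hr := hrec (T + n)
      have hβT : β (T + n) < lam * (δ / 3) := hT _ (Nat.le_add_right _ _)
      have hηpos := (hη (T + n)).1
      have h1 : η (T + n) * β (T + n) ≤ η (T + n) * (lam * (δ / 3)) :=
        mul_le_mul_of_nonneg_left hβT.le hηpos.le
      have h2 : (1 - η (T + n) * lam) * ε (T + n)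
          ≤ (1 - η (T + n) * lam) * (δ / 3 + P n * ε T) :=
        mul_le_mul_of_nonneg_left ih (hfac _)
      have hPsucc : P (n + 1) = P n * (1 - η (T + n) * lam) := by
        simp [hP, Finset.prod_range_succ]
      have : ε (T + (n + 1)) = ε (T + n + 1) := by ring_nf
      rw [this]
      calc ε (T + n + 1) ≤ (1 - η (T + n) * lam) * ε (T + n)
            + η (T + n) * β (T + n) := hr
        _ ≤ (1 - η (T + n) * lam) * (δ / 3 + P n * ε T)
            + η (T + n) * (lam * (δ / 3)) := by linarith
        _ = δ / 3 + P (n + 1) * ε T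
            - (η (T + n) * lam) * (δ / 3) + η (T + n) * (lam * (δ / 3)) := by
            rw [hPsucc]; ring
        _ = δ / 3 + P (n + 1) * ε T := by ring
  -- P n → 0
  have hSum : Filter.Tendsto (fun n => ∑ k ∈ Finset.range n, η (T + k))
      Filter.atTop Filter.atTop := by
    have hadd : Filter.Tendsto (fun n : ℕ => T + n) Filter.atTop Filter.atTop :=
      Filter.tendsto_atTop_mono (fun n => Nat.le_add_left n T) Filter.tendsto_id
    have hcomp : Filter.Tendsto (fun n => ∑ t ∈ Finset.range (T + n), η t)
        Filter.atTop Filter.atTop := hηsum.comp hadd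
    have heq : ∀ n, ∑ k ∈ Finset.range n, η (T + k)
        = ∑ t ∈ Finset.range (T + n), η t - ∑ t ∈ Finset.range T, η t := by
      intro n
      rw [Finset.sum_range_add]
      ring
    simp only [heq, sub_eq_add_neg]
    exact Filter.tendsto_atTop_add_const_right _ _ hcomp
  have hPle : ∀ n, P n ≤ Real.exp (-(lam * ∑ k ∈ Finset.range n, η (T + k))) := by
    intro n
    have : -(lam * ∑ k ∈ Finset.range n, η (T + k))
        = ∑ k ∈ Finset.range n, -(η (T + k) * lam) := by
      rw [Finset.mul_sum, ← Finset.sum_neg_distrib]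
      exact Finset.sum_congr rfl fun k _ => by ring
    rw [this, Real.exp_sum]
    apply Finset.prod_le_prod (fun k _ => hfac _)
    intro k _
    have := Real.add_one_le_exp (-(η (T + k) * lam))
    linarith
  have hexp : Filter.Tendsto (fun n => Real.exp (-(lam * ∑ k ∈ Finset.range n, η (T + k))) * ε T)
      Filter.atTop (nhds 0) := by
    have h1 : Filter.Tendsto (fun n => lam * ∑ k ∈ Finset.range n, η (T + k))
        Filter.atTop Filter.atTop := hSum.const_mul_atTop hlam
    have h2 := (Real.tendsto_exp_neg_atTop_nhds_zero.comp h1).mul_const (ε T)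
    simpa [Function.comp] using h2
  have hPT : Filter.Tendsto (fun n => P n * ε T) Filter.atTop (nhds 0) := by
    apply squeeze_zero (fun n => mul_nonneg (hPnonneg n) (hεnonneg T))
      (fun n => mul_le_mul_of_nonneg_right (hPle n) (hεnonneg T)) hexp
  obtain ⟨N, hN⟩ := Filter.eventually_atTop.mp
    (hPT.eventually (eventually_lt_nhds (show (0:ℝ) < δ / 3 by linarith)))
  refine ⟨T + N, fun t ht => ?_⟩
  have h1 : ε t ≤ δ / 3 + P (t - T) * ε T := by
    have := key (t - T)
    rwa [show T + (t - T) = t from by omega] at this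
  have h2 : P (t - T) * ε T < δ / 3 := hN _ (by omega)
  rw [Real.dist_eq, sub_zero, abs_of_nonneg (hεnonneg t)]
  linarith
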